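/- Let (a_{i,j})_{i,j≥1} be a family of even integers and let f = 1 + Σ_{i,j≥1} a_{i,j} U^i T^j be the corresponding formal power series in two variables over ℤ. Then there exists a unique family of integers (b_{i,j})_{i,j≥1} such that f = Π_{i,j≥1} ((1 − U^i T^j)·(1 + U^i T^j)^{-1})^{b_{i,j}}, coefficientwise: for all m, n ≥ 1, the coefficient of U^m T^n in the finite product Π_{1≤i≤m, 1≤j≤n} ((1 − U^i T^j)·(1 + U^i T^j)^{-1})^{b_{i,j}} equals a_{m,n}. -/

import Mathlib

/-- Integer power of an element of a monoid with zero: for units this agrees with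
the `zpow` in the unit group; negative exponents use `Ring.inverse`. -/
noncomputable def ringZpow {R : Type*} [MonoidWithZero R] (f : R) (n : ℤ) : R :=
  if 0 ≤ n then f ^ n.toNat else Ring.inverse f ^ (-n).toNat

/-- The coefficient of `U^m T^n` in `ℤ⟦U,T⟧ = MvPowerSeries (Fin 2) ℤ`, `U = X 0`, `T = X 1`. -/
noncomputable def coeffUT (m n : ℕ) : MvPowerSeries (Fin 2) ℤ →ₗ[ℤ] ℤ :=
  MvPowerSeries.coeff (R := ℤ) (Finsupp.single (0 : Fin 2) m + Finsupp.single (1 : Fin 2) n)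

/-- The factor `(1 - U^i T^j) · (1 + U^i T^j)⁻¹` in `ℤ⟦U,T⟧`. -/
noncomputable def minusOverPlusUT (i j : ℕ) : MvPowerSeries (Fin 2) ℤ :=
  (1 - MvPowerSeries.X (0 : Fin 2) ^ i * MvPowerSeries.X (1 : Fin 2) ^ j) *
    Ring.inverse (1 + MvPowerSeries.X (0 : Fin 2) ^ i * MvPowerSeries.X (1 : Fin 2) ^ j)


open MvPowerSeries Finsupp

abbrev Rr := MvPowerSeries (Fin 2) ℤ

noncomputable def sUT (m n : ℕ) : Rr :=
  MvPowerSeries.X (0 : Fin 2) ^ m * MvPowerSeries.X (1 : Fin 2) ^ n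

noncomputable def eUT (m n : ℕ) : Fin 2 →₀ ℕ := Finsupp.single (0 : Fin 2) m + Finsupp.single (1 : Fin 2) n

lemma sUT_eq (m n : ℕ) : sUT m n = MvPowerSeries.monomial (R := ℤ) (eUT m n) 1 := by
  rw [sUT, eUT, X_pow_eq, X_pow_eq, monomial_mul_monomial, one_mul]

lemma eUT_ne_zero {m n : ℕ} (hm : 1 ≤ m) : eUT m n ≠ 0 := by
  intro h
  have := congrArg (fun f => f (0 : Fin 2)) h
  simp [eUT] at this
  omega

lemma constCoeff_sUT {m n : ℕ} (hm : 1 ≤ m) :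
    MvPowerSeries.constantCoeff (σ := Fin 2) (R := ℤ) (sUT m n) = 0 := by
  rw [sUT_eq]
  rw [← MvPowerSeries.coeff_zero_eq_constantCoeff, MvPowerSeries.coeff_monomial,
    if_neg (by exact fun h => eUT_ne_zero hm h.symm)]

lemma isUnit_one_add_sUT {m n : ℕ} (hm : 1 ≤ m) : IsUnit (1 + sUT m n) := by
  rw [MvPowerSeries.isUnit_iff_constantCoeff]
  simp [constCoeff_sUT hm]

lemma isUnit_one_sub_sUT {m n : ℕ} (hm : 1 ≤ m) : IsUnit (1 - sUT m n) := by
  rw [MvPowerSeries.isUnit_iff_constantCoeff]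
  simp [constCoeff_sUT hm]

lemma minusOverPlusUT_eq (m n : ℕ) :
    minusOverPlusUT m n = (1 - sUT m n) * Ring.inverse (1 + sUT m n) := rfl

lemma isUnit_mOP {m n : ℕ} (hm : 1 ≤ m) : IsUnit (minusOverPlusUT m n) := by
  rw [minusOverPlusUT_eq]
  exact (isUnit_one_sub_sUT hm).mul (isUnit_ringInverse.2 (isUnit_one_add_sUT hm))

lemma inv_one_add_struct {m n : ℕ} (hm : 1 ≤ m) :
    ∃ h : Rr, Ring.inverse (1 + sUT m n) = 1 - sUT m n + h * (sUT m n)^2 := by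
  set s := sUT m n
  have hV : (1 + s) * Ring.inverse (1 + s) = 1 := Ring.mul_inverse_cancel _ (isUnit_one_add_sUT hm)
  exact ⟨Ring.inverse (1 + s), by linear_combination (1 - s) * hV⟩

lemma mOP_struct {m n : ℕ} (hm : 1 ≤ m) :
    ∃ h : Rr, minusOverPlusUT m n = 1 - 2 * sUT m n + h * (sUT m n)^2 := by
  obtain ⟨h, hV⟩ := inv_one_add_struct (m := m) (n := n) hm
  refine ⟨1 + (1 - sUT m n) * h, ?_⟩
  rw [minusOverPlusUT_eq, hV]
  ring

lemma inv_mOP_struct {m n : ℕ} (hm : 1 ≤ m) :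
    ∃ h : Rr, Ring.inverse (minusOverPlusUT m n) = 1 + 2 * sUT m n + h * (sUT m n)^2 := by
  obtain ⟨h, hF⟩ := mOP_struct (m := m) (n := n) hm
  set s := sUT m n
  set W := Ring.inverse (minusOverPlusUT m n) with hWdef
  have hW : minusOverPlusUT m n * W = 1 := Ring.mul_inverse_cancel _ (isUnit_mOP hm)
  rw [hF] at hW
  exact ⟨W * (4 - h * (1 + 2*s)), by linear_combination (1 + 2*s) * hW⟩

lemma pow_struct {A s a h : Rr} (hA : A = 1 + a * s + h * s^2) (k : ℕ) :
    ∃ h' : Rr, A ^ k = 1 + (k : Rr) * a * s + h' * s^2 := by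
  induction k with
  | zero => exact ⟨0, by push_cast; ring⟩
  | succ k ih =>
    obtain ⟨h', hk⟩ := ih
    refine ⟨h + (k : Rr)*a*a + (k : Rr)*a*h*s + h' + h'*a*s + h'*h*s^2, ?_⟩
    rw [pow_succ, hk, hA]
    push_cast
    ring

lemma ringZpow_struct {m n : ℕ} (hm : 1 ≤ m) (c : ℤ) :
    ∃ h : Rr, ringZpow (minusOverPlusUT m n) c
      = 1 + ((-2*c : ℤ) : Rr) * sUT m n + h * (sUT m n)^2 := by
  rw [ringZpow]
  split_ifs with hc
  · obtain ⟨h, hF⟩ := mOP_struct (m := m) (n := n) hm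
    obtain ⟨h', hk⟩ := pow_struct (A := minusOverPlusUT m n) (s := sUT m n) (a := -2) (h := h) (by rw [hF]; ring) c.toNat
    refine ⟨h', ?_⟩
    rw [hk]
    have : ((c.toNat : ℤ) : Rr) = (c : Rr) := by rw [Int.toNat_of_nonneg hc]
    push_cast at this ⊢
    rw [this]
    ring
  · obtain ⟨h, hF⟩ := inv_mOP_struct (m := m) (n := n) hm
    obtain ⟨h', hk⟩ := pow_struct (A := Ring.inverse (minusOverPlusUT m n)) (s := sUT m n) (a := 2) (h := h) (by rw [hF]) (-c).toNat
    refine ⟨h', ?_⟩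
    rw [hk]
    have : (((-c).toNat : ℤ) : Rr) = ((-c : ℤ) : Rr) := by
      rw [Int.toNat_of_nonneg (by omega)]
    push_cast at this ⊢
    rw [this]
    ring

lemma coeffUT_eq (m n : ℕ) (f : Rr) : coeffUT m n f = MvPowerSeries.coeff (R := ℤ) (eUT m n) f := rfl

lemma coeff_mul_sq {m n : ℕ} (hm : 1 ≤ m) (g : Rr) :
    MvPowerSeries.coeff (R := ℤ) (eUT m n) (g * (sUT m n)^2) = 0 := by
  have hs2 : (sUT m n)^2 = MvPowerSeries.monomial (R := ℤ) (eUT m n + eUT m n) 1 := by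
    rw [sUT_eq, sq, monomial_mul_monomial, one_mul]
  rw [hs2, MvPowerSeries.coeff_mul_monomial, if_neg]
  intro hle
  have := hle 0
  simp [eUT] at this
  omega

lemma coeff_eUT_mul_sUT {m n : ℕ} (g : Rr) :
    MvPowerSeries.coeff (R := ℤ) (eUT m n) (g * sUT m n)
      = MvPowerSeries.constantCoeff (σ := Fin 2) (R := ℤ) g := by
  rw [sUT_eq, MvPowerSeries.coeff_mul_monomial, if_pos le_rfl, tsub_self, mul_one,
    MvPowerSeries.coeff_zero_eq_constantCoeff]

lemma key_coeff {m n : ℕ} (hm : 1 ≤ m) (c : ℤ) (Q : Rr) :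
    coeffUT m n (Q * ringZpow (minusOverPlusUT m n) c)
      = MvPowerSeries.coeff (R := ℤ) (eUT m n) Q
        - 2 * c * MvPowerSeries.constantCoeff (σ := Fin 2) (R := ℤ) Q := by
  obtain ⟨h, hg⟩ := ringZpow_struct (n := n) hm c
  rw [coeffUT_eq, hg]
  have : Q * (1 + ((-2*c : ℤ) : Rr) * sUT m n + h * (sUT m n)^2)
      = Q + (-2*c : ℤ) • (Q * sUT m n) + (Q * h) * (sUT m n)^2 := by
    rw [zsmul_eq_mul]
    push_cast
    ring
  rw [this, map_add, map_add, map_zsmul, coeff_eUT_mul_sUT, coeff_mul_sq hm]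
  simp only [smul_eq_mul]
  ring

lemma map_ringInverse {R S : Type*} [CommRing R] [CommRing S] (f : R →+* S) {a : R}
    (ha : IsUnit a) : f (Ring.inverse a) = Ring.inverse (f a) := by
  symm
  have h1 : a * Ring.inverse a = 1 := Ring.mul_inverse_cancel a ha
  have h2 : f a * f (Ring.inverse a) = 1 := by rw [← map_mul, h1, map_one]
  have hu : IsUnit (f a) := ha.map f
  calc Ring.inverse (f a) = Ring.inverse (f a) * (f a * f (Ring.inverse a)) := by
        rw [h2, mul_one]
    _ = (Ring.inverse (f a) * f a) * f (Ring.inverse a) := by rw [mul_assoc]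
    _ = f (Ring.inverse a) := by rw [Ring.inverse_mul_cancel _ hu, one_mul]

lemma map_ringZpow {R S : Type*} [CommRing R] [CommRing S] (f : R →+* S) {a : R}
    (ha : IsUnit a) (c : ℤ) : f (ringZpow a c) = ringZpow (f a) c := by
  rw [ringZpow, ringZpow]
  split_ifs
  · rw [map_pow]
  · rw [map_pow, map_ringInverse f ha]

lemma ringZpow_one {R : Type*} [CommRing R] (c : ℤ) : ringZpow (1 : R) c = 1 := by
  rw [ringZpow]
  split_ifs <;> simp

abbrev R2 := MvPowerSeries (Fin 2) (ZMod 2)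

noncomputable def phi2 : Rr →+* R2 := MvPowerSeries.map (σ := Fin 2) (Int.castRingHom (ZMod 2))

lemma two_eq_zero_R2 : (2 : R2) = 0 := by
  have h : (2 : ZMod 2) = 0 := by decide
  calc (2 : R2) = (MvPowerSeries.C (σ := Fin 2) (R := ZMod 2)) 2 := by rw [map_ofNat]
    _ = 0 := by rw [h, map_zero]

lemma phi2_mOP {m n : ℕ} (hm : 1 ≤ m) : phi2 (minusOverPlusUT m n) = 1 := by
  rw [minusOverPlusUT_eq, map_mul, map_ringInverse phi2 (isUnit_one_add_sUT hm),
    map_sub, map_add, map_one]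
  set y := phi2 (sUT m n)
  have hy : (1 : R2) - y = 1 + y := by linear_combination (-y) * two_eq_zero_R2
  rw [hy]
  apply Ring.mul_inverse_cancel
  rw [MvPowerSeries.isUnit_iff_constantCoeff]
  have : MvPowerSeries.constantCoeff (σ := Fin 2) (R := ZMod 2) y = 0 := by
    show MvPowerSeries.constantCoeff (σ := Fin 2) (R := ZMod 2) (phi2 (sUT m n)) = 0
    rw [phi2, MvPowerSeries.constantCoeff_map, constCoeff_sUT hm]
    simp
  simp [this]

lemma even_coeff_prod {m n : ℕ} (hm : 1 ≤ m) (S : Finset (ℕ × ℕ))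
    (hS : ∀ p ∈ S, 1 ≤ p.1) (c : ℕ × ℕ → ℤ) :
    Even (MvPowerSeries.coeff (R := ℤ) (eUT m n)
      (∏ p ∈ S, ringZpow (minusOverPlusUT p.1 p.2) (c p))) := by
  have h1 : phi2 (∏ p ∈ S, ringZpow (minusOverPlusUT p.1 p.2) (c p)) = 1 := by
    rw [map_prod]
    rw [Finset.prod_eq_one]
    intro p hp
    rw [map_ringZpow phi2 (isUnit_mOP (hS p hp)), phi2_mOP (hS p hp), ringZpow_one]
  have h2 : ((MvPowerSeries.coeff (R := ℤ) (eUT m n)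
      (∏ p ∈ S, ringZpow (minusOverPlusUT p.1 p.2) (c p)) : ℤ) : ZMod 2) = 0 := by
    have := congrArg (MvPowerSeries.coeff (R := ZMod 2) (eUT m n)) h1
    rw [phi2, MvPowerSeries.coeff_map] at this
    rw [MvPowerSeries.coeff_one, if_neg (eUT_ne_zero hm)] at this
    exact this
  rw [ZMod.intCast_zmod_eq_zero_iff_dvd] at h2
  obtain ⟨k, hk⟩ := h2
  exact ⟨k, by omega⟩

lemma constCoeff_ringZpow_mOP {m n : ℕ} (hm : 1 ≤ m) (c : ℤ) :
    MvPowerSeries.constantCoeff (σ := Fin 2) (R := ℤ) (ringZpow (minusOverPlusUT m n) c) = 1 := by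
  rw [map_ringZpow _ (isUnit_mOP hm)]
  have h1 : MvPowerSeries.constantCoeff (σ := Fin 2) (R := ℤ) (minusOverPlusUT m n) = 1 := by
    rw [minusOverPlusUT_eq, map_mul, map_ringInverse _ (isUnit_one_add_sUT hm),
      map_sub, map_add, map_one, constCoeff_sUT hm]
    simp
  rw [h1, ringZpow_one]

lemma constCoeff_prodZ {S : Finset (ℕ × ℕ)} (hS : ∀ p ∈ S, 1 ≤ p.1) (c : ℕ × ℕ → ℤ) :
    MvPowerSeries.constantCoeff (σ := Fin 2) (R := ℤ)
      (∏ p ∈ S, ringZpow (minusOverPlusUT p.1 p.2) (c p)) = 1 := by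
  rw [map_prod]
  exact Finset.prod_eq_one fun p hp => constCoeff_ringZpow_mOP (hS p hp) (c p)

noncomputable def bfun (a : ℕ → ℕ → ℤ) (p : ℕ × ℕ) : ℤ :=
  if h : 1 ≤ p.1 ∧ 1 ≤ p.2 then
    (MvPowerSeries.coeff (R := ℤ) (eUT p.1 p.2)
      (∏ q ∈ ((Finset.Icc 1 p.1 ×ˢ Finset.Icc 1 p.2).erase p).attach,
        ringZpow (minusOverPlusUT q.1.1 q.1.2) (bfun a q.1)) - a p.1 p.2) / 2
  else 0
termination_by p.1 + p.2
decreasing_by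
  obtain ⟨hne, hmem⟩ := Finset.mem_erase.1 q.2
  rw [Finset.mem_product, Finset.mem_Icc, Finset.mem_Icc] at hmem
  rw [Ne, Prod.ext_iff, not_and_or] at hne
  have hx : q.1.1 ≤ p.1 := hmem.1.2
  have hy : q.1.2 ≤ p.2 := hmem.2.2
  omega

noncomputable def Qprod (b : ℕ → ℕ → ℤ) (m n : ℕ) : Rr :=
  ∏ q ∈ (Finset.Icc 1 m ×ˢ Finset.Icc 1 n).erase (m, n),
    ringZpow (minusOverPlusUT q.1 q.2) (b q.1 q.2)

lemma mem_grid_one_le {m n : ℕ} :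
    ∀ p ∈ (Finset.Icc 1 m ×ˢ Finset.Icc 1 n).erase (m, n), 1 ≤ p.1 := by
  intro p hp
  have := (Finset.mem_erase.1 hp).2
  rw [Finset.mem_product, Finset.mem_Icc] at this
  exact this.1.1

lemma bfun_eq (a : ℕ → ℕ → ℤ) {m n : ℕ} (hm : 1 ≤ m) (hn : 1 ≤ n) :
    bfun a (m, n) = (MvPowerSeries.coeff (R := ℤ) (eUT m n)
      (Qprod (fun i j => bfun a (i, j)) m n) - a m n) / 2 := by
  rw [bfun]
  rw [dif_pos ⟨hm, hn⟩]
  congr 2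
  rw [Qprod]
  rw [← Finset.prod_attach ((Finset.Icc 1 m ×ˢ Finset.Icc 1 n).erase (m, n))
    (fun q => ringZpow (minusOverPlusUT q.1 q.2) (bfun a (q.1, q.2)))]

lemma full_split (b : ℕ → ℕ → ℤ) {m n : ℕ} (hm : 1 ≤ m) (hn : 1 ≤ n) :
    (∏ i ∈ Finset.Icc 1 m, ∏ j ∈ Finset.Icc 1 n, ringZpow (minusOverPlusUT i j) (b i j))
      = Qprod b m n * ringZpow (minusOverPlusUT m n) (b m n) := by
  have hmem : (m, n) ∈ Finset.Icc 1 m ×ˢ Finset.Icc 1 n := by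
    rw [Finset.mem_product, Finset.mem_Icc, Finset.mem_Icc]
    exact ⟨⟨hm, le_rfl⟩, hn, le_rfl⟩
  rw [← Finset.prod_product' (f := fun i j => ringZpow (minusOverPlusUT i j) (b i j)),
    ← Finset.mul_prod_erase _ _ hmem, mul_comm]
  rw [Qprod]

lemma coeff_full (b : ℕ → ℕ → ℤ) {m n : ℕ} (hm : 1 ≤ m) (hn : 1 ≤ n) :
    coeffUT m n (∏ i ∈ Finset.Icc 1 m, ∏ j ∈ Finset.Icc 1 n,
        ringZpow (minusOverPlusUT i j) (b i j))
      = MvPowerSeries.coeff (R := ℤ) (eUT m n) (Qprod b m n) - 2 * b m n := by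
  rw [full_split b hm hn, key_coeff hm, Qprod,
    constCoeff_prodZ mem_grid_one_le (fun q => b q.1 q.2)]
  ring

lemma even_coeff_Q (b : ℕ → ℕ → ℤ) {m n : ℕ} (hm : 1 ≤ m) :
    Even (MvPowerSeries.coeff (R := ℤ) (eUT m n) (Qprod b m n)) :=
  even_coeff_prod hm _ mem_grid_one_le (fun q => b q.1 q.2)

lemma Q_congr {b b' : ℕ → ℕ → ℤ} {m n : ℕ}
    (h : ∀ i j, 1 ≤ i → 1 ≤ j → i + j < m + n → b i j = b' i j) :
    Qprod b m n = Qprod b' m n := by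
  refine Finset.prod_congr rfl fun q hq => ?_
  obtain ⟨hne, hmem⟩ := Finset.mem_erase.1 hq
  rw [Finset.mem_product, Finset.mem_Icc, Finset.mem_Icc] at hmem
  rw [Ne, Prod.ext_iff, not_and_or] at hne
  rw [h q.1 q.2 hmem.1.1 hmem.2.1 (by omega)]


/-- Lemma 3.2 (qTransform2): given a family of even integers `(a_{i,j})_{i,j ≥ 1}`, there exists
a unique family of integers `(b_{i,j})_{i,j ≥ 1}` such that
`1 + Σ a_{i,j} U^i T^j = ∏_{i,j ≥ 1} ((1 - U^i T^j)(1 + U^i T^j)⁻¹)^{b_{i,j}}`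
coefficientwise: for all `m, n ≥ 1` the coefficient of `U^m T^n` in the finite product
`∏_{1 ≤ i ≤ m} ∏_{1 ≤ j ≤ n} ((1 - U^i T^j)(1 + U^i T^j)⁻¹)^{b_{i,j}}` equals `a_{m,n}`. -/
theorem statement4 (a : ℕ → ℕ → ℤ) (ha : ∀ i j : ℕ, 1 ≤ i → 1 ≤ j → Even (a i j)) :
    ∃ b : ℕ → ℕ → ℤ,
      (∀ m n : ℕ, 1 ≤ m → 1 ≤ n →
        coeffUT m n
          (∏ i ∈ Finset.Icc 1 m, ∏ j ∈ Finset.Icc 1 n,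
            ringZpow (minusOverPlusUT i j) (b i j)) = a m n) ∧
      (∀ b' : ℕ → ℕ → ℤ,
        (∀ m n : ℕ, 1 ≤ m → 1 ≤ n →
          coeffUT m n
            (∏ i ∈ Finset.Icc 1 m, ∏ j ∈ Finset.Icc 1 n,
              ringZpow (minusOverPlusUT i j) (b' i j)) = a m n) →
        ∀ i j : ℕ, 1 ≤ i → 1 ≤ j → b' i j = b i j) := by
  refine ⟨fun i j => bfun a (i, j), ?_, ?_⟩
  · intro m n hm hn
    rw [coeff_full _ hm hn, bfun_eq a hm hn]
    obtain ⟨x, hx⟩ := even_coeff_Q (fun i j => bfun a (i, j)) (m := m) (n := n) hm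
    obtain ⟨y, hy⟩ := ha m n hm hn
    omega
  · intro b' hb'
    have key : ∀ k : ℕ, ∀ m n : ℕ, 1 ≤ m → 1 ≤ n → m + n = k → b' m n = bfun a (m, n) := by
      intro k
      induction k using Nat.strong_induction_on with
      | _ k ih =>
        intro m n hm hn hk
        have h1 := hb' m n hm hn
        rw [coeff_full _ hm hn] at h1
        have hQ : Qprod b' m n = Qprod (fun i j => bfun a (i, j)) m n :=
          Q_congr (fun i j hi hj hlt => ih (i + j) (by omega) i j hi hj rfl)
        rw [hQ] at h1
        have h2 := bfun_eq a hm hn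
        obtain ⟨x, hx⟩ := even_coeff_Q (fun i j => bfun a (i, j)) (m := m) (n := n) hm
        obtain ⟨y, hy⟩ := ha m n hm hn
        omega
    intro i j hi hj
    exact key (i + j) i j hi hj rfl
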